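/- Let Ξ be a map from the set of prime numbers to M_d(ℤ) such that any two matrices in its image commute, and let λ_Ξ be the associated d-tuple of power series over ℚ. Then for every prime p, the d-tuple of power series p·λ_Ξ(x_1,…,x_d) − Ξ(p)·λ_Ξ(x_1^p,…,x_d^p) is equal to Σ_{m≥1, gcd(m,p)=1} (p/m)·A_m·(x_1^m,…,x_d^m)^T; in particular, every coefficient of this d-tuple is a rational number of p-adic valuation at least 1 (i.e. lies in p·ℤ_(p)). -/

import Mathlib

private def Amat {d : ℕ} (Ξ : ℕ → Matrix (Fin d) (Fin d) ℤ)
    (hΞ : ∀ p q : ℕ, p.Prime → q.Prime → Commute (Ξ p) (Ξ q)) (m : ℕ) :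
    Matrix (Fin d) (Fin d) ℤ :=
  (m.factorization.support).noncommProd (fun q => Ξ q ^ m.factorization q)
    (show Set.Pairwise _ _ from fun q hq q' hq' _ => Commute.pow_pow
          (hΞ q q' (Nat.prime_of_mem_primeFactors hq) (Nat.prime_of_mem_primeFactors hq')) _ _)

/-- extend a noncommProd over supp of a factorization-like finsupp to a superset of primes -/
private theorem noncommProd_extend {d : ℕ} {Ξ : ℕ → Matrix (Fin d) (Fin d) ℤ}
    (f : ℕ →₀ ℕ) (s : Finset ℕ) (hsub : f.support ⊆ s)
    (c1 : (↑f.support : Set ℕ).Pairwise (Function.onFun Commute (fun q => Ξ q ^ f q)))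
    (c2 : (↑s : Set ℕ).Pairwise (Function.onFun Commute (fun q => Ξ q ^ f q))) :
    f.support.noncommProd (fun q => Ξ q ^ f q) c1 = s.noncommProd (fun q => Ξ q ^ f q) c2 := by
  classical
  have h : s = f.support ∪ (s \ f.support) := (Finset.union_sdiff_of_subset hsub).symm
  rw [show s.noncommProd (fun q => Ξ q ^ f q) c2 = (f.support ∪ (s \ f.support)).noncommProd
      (fun q => Ξ q ^ f q) (by rw [← h]; exact c2) from Finset.noncommProd_congr h (fun _ _ => rfl) c2,
    Finset.noncommProd_union_of_disjoint Finset.disjoint_sdiff,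
    Finset.noncommProd_eq_pow_card (s \ f.support) _ _ 1 ?_, one_pow, mul_one]
  intro x hx
  rw [Finsupp.notMem_support_iff.mp (Finset.mem_sdiff.mp hx).2, pow_zero]

private theorem Amat_mul_prime {d : ℕ} {Ξ : ℕ → Matrix (Fin d) (Fin d) ℤ}
    (hΞ : ∀ p q : ℕ, p.Prime → q.Prime → Commute (Ξ p) (Ξ q))
    {p n : ℕ} (hp : p.Prime) (hn : n ≠ 0) :
    Amat Ξ hΞ (p * n) = Ξ p * Amat Ξ hΞ n := by
  classical
  have hpn : p * n ≠ 0 := mul_ne_zero hp.ne_zero hn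
  have hfact : (p * n).factorization = (Finsupp.single p 1) + n.factorization := by
    rw [Nat.factorization_mul hp.ne_zero hn, hp.factorization]
  set s : Finset ℕ := (p * n).primeFactors with hs
  have hsprime : ∀ q ∈ s, q.Prime := fun q hq => Nat.prime_of_mem_primeFactors hq
  have hps : p ∈ s := Nat.mem_primeFactors.mpr ⟨hp, dvd_mul_right p n, hpn⟩
  have hcomm : ∀ (f g : ℕ → ℕ), (↑s : Set ℕ).Pairwise
      (fun a b => Commute (Ξ a ^ f a) (Ξ b ^ g b)) := fun f g a ha b hb _ =>
    Commute.pow_pow (hΞ a b (hsprime a ha) (hsprime b hb)) _ _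
  have hsupp : (p * n).factorization.support = s := Nat.support_factorization (p*n)
  -- A (p*n) as noncommProd over s
  have step1 : Amat Ξ hΞ (p * n) =
      s.noncommProd ((fun q => Ξ q ^ (Finsupp.single p 1) q) * (fun q => Ξ q ^ n.factorization q))
        (Finset.noncommProd_mul_distrib_aux (hcomm _ _) (hcomm _ _) (hcomm _ _)) := by
    rw [Amat, noncommProd_extend _ s (by rw [hsupp])
      _ (hcomm (p*n).factorization (p*n).factorization)]
    exact Finset.noncommProd_congr rfl (fun q _ => by rw [hfact, Finsupp.add_apply, pow_add]; rfl) _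
  rw [step1, Finset.noncommProd_mul_distrib _ _ (hcomm _ _) (hcomm _ _) (hcomm _ _)]
  congr 1
  · -- the single-p factor is Ξ p
    have herase : s = insert p (s.erase p) := (Finset.insert_erase hps).symm
    rw [show s.noncommProd (fun a => Ξ a ^ (Finsupp.single p 1) a) (hcomm _ _) =
        (insert p (s.erase p)).noncommProd (fun a => Ξ a ^ (Finsupp.single p 1) a)
          (by rw [← herase]; exact hcomm _ _) from
        Finset.noncommProd_congr herase (fun _ _ => rfl) (hcomm _ _),
      Finset.noncommProd_insert_of_notMem _ _ _ _ (Finset.notMem_erase p s),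
      Finset.noncommProd_eq_pow_card (s.erase p) _ _ 1 ?_, one_pow, mul_one,
      Finsupp.single_eq_same, pow_one]
    intro x hx
    rw [Finsupp.single_eq_of_ne' (Ne.symm (Finset.ne_of_mem_erase hx)), pow_zero]
  · -- the n factor is Amat n
    rw [Amat, noncommProd_extend _ s ?_ _ (hcomm _ _)]
    rw [Nat.support_factorization]
    exact Nat.primeFactors_mono (dvd_mul_left n p) hpn


/-- the p-type of λ_Ξ.  For every prime `p`, the series
`p·λ_Ξ(X) − Ξ(p)·λ_Ξ(X^p)` equals `Σ_{(m,p)=1} (p/m)·A_m·X^m`, and in particular all of its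
coefficients are rationals of `p`-adic valuation at least `1`. -/
theorem lamXi_p_type (d : ℕ)
    (Ξ : ℕ → Matrix (Fin d) (Fin d) ℤ)
    (hΞ : ∀ p q : ℕ, p.Prime → q.Prime → Commute (Ξ p) (Ξ q)) :
    let A : ℕ → Matrix (Fin d) (Fin d) ℤ := fun m =>
      (m.factorization.support).noncommProd (fun q => Ξ q ^ m.factorization q)
        (fun q hq q' hq' _ => Commute.pow_pow
          (hΞ q q' (Nat.prime_of_mem_primeFactors hq) (Nat.prime_of_mem_primeFactors hq')) _ _)
    let lam : Fin d → MvPowerSeries (Fin d) ℚ := fun l =>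
      fun e => ∑ l' : Fin d,
        if e = Finsupp.single l' (e l') ∧ e l' ≠ 0 then ((A (e l')) l l' : ℚ) / (e l') else 0
    ∀ p : ℕ, p.Prime →
      -- λ_Ξ with every variable replaced by its p-th power
      let lamp : Fin d → MvPowerSeries (Fin d) ℚ := fun l' =>
        fun e => if ∀ i ∈ e.support, p ∣ e i
          then lam l' (e.mapRange (· / p) (Nat.zero_div p)) else 0
      -- the left-hand side  p·λ_Ξ − Ξ(p)·λ_Ξ(X^p)
      let lhs : Fin d → MvPowerSeries (Fin d) ℚ := fun l =>
        (p : ℚ) • lam l - ∑ l' : Fin d, ((Ξ p) l l' : ℚ) • lamp l'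
      -- the right-hand side  Σ_{(m,p)=1} (p/m)·A_m·X^m
      (lhs = fun l =>
        fun e => ∑ l' : Fin d,
          if e = Finsupp.single l' (e l') ∧ e l' ≠ 0 ∧ ¬ p ∣ e l'
            then (p : ℚ) * ((A (e l')) l l' : ℚ) / (e l') else 0) ∧
      -- every coefficient has p-adic valuation at least 1
      (∀ (l : Fin d) (e : Fin d →₀ ℕ),
        MvPowerSeries.coeff e (lhs l) = 0 ∨
        1 ≤ padicValRat p (MvPowerSeries.coeff e (lhs l))) := by
  intro A lam p hp lamp lhs
  haveI : Fact p.Prime := ⟨hp⟩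
  have hA : ∀ m, A m = Amat Ξ hΞ m := fun _ => rfl
  have hco : ∀ (l : Fin d) (e : Fin d →₀ ℕ),
      MvPowerSeries.coeff e (lhs l) =
      ∑ l' : Fin d, if e = Finsupp.single l' (e l') ∧ e l' ≠ 0 ∧ ¬ p ∣ e l'
        then (p : ℚ) * ((A (e l')) l l' : ℚ) / (e l') else 0 := by
    intro l e
    have hcoeff : MvPowerSeries.coeff e (lhs l) =
        (p : ℚ) * lam l e - ∑ l' : Fin d, ((Ξ p) l l' : ℚ) * lamp l' e := by
      simp only [lhs, map_sub, map_smul, map_sum, MvPowerSeries.coeff_apply, smul_eq_mul]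
    rw [hcoeff]
    by_cases hB : ∃ l0 : Fin d, e = Finsupp.single l0 (e l0) ∧ e l0 ≠ 0
    · obtain ⟨l0, he, hm0⟩ := hB
      have hz : ∀ l' : Fin d, l' ≠ l0 → e l' = 0 := by
        intro l' hl
        conv_lhs => rw [he]
        exact Finsupp.single_eq_of_ne' (Ne.symm hl)
      have hlam : lam l e = ((A (e l0)) l l0 : ℚ) / (e l0) := by
        show (∑ l' : Fin d, if e = Finsupp.single l' (e l') ∧ e l' ≠ 0
          then ((A (e l')) l l' : ℚ) / (e l') else 0) = _
        rw [Finset.sum_eq_single l0]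
        · rw [if_pos ⟨he, hm0⟩]
        · intro l' _ hl
          exact if_neg fun h => h.2 (hz l' hl)
        · exact fun h => absurd (Finset.mem_univ l0) h
      by_cases hpm : p ∣ e l0
      · -- p divides the exponent : LHS and RHS both vanish
        obtain ⟨k, hk⟩ := hpm
        have hk0 : k ≠ 0 := by rintro rfl; exact hm0 (by rw [hk, mul_zero])
        have hmap : e.mapRange (· / p) (Nat.zero_div p) = Finsupp.single l0 k := by
          conv_lhs => rw [he]
          rw [Finsupp.mapRange_single, hk, Nat.mul_div_cancel_left k hp.pos]
        have hdvd : ∀ i ∈ e.support, p ∣ e i := by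
          intro i hi
          by_cases hil : i = l0
          · subst hil; exact ⟨k, hk⟩
          · rw [hz i hil]; exact dvd_zero p
        have hlamp : ∀ l' : Fin d, lamp l' e = ((A k) l' l0 : ℚ) / k := by
          intro l'
          show (if ∀ i ∈ e.support, p ∣ e i
            then lam l' (e.mapRange (· / p) (Nat.zero_div p)) else 0) = _
          rw [if_pos hdvd, hmap]
          show (∑ l'' : Fin d, if (Finsupp.single l0 k) = Finsupp.single l''
                ((Finsupp.single l0 k) l'') ∧ (Finsupp.single l0 k) l'' ≠ 0
            then ((A ((Finsupp.single l0 k) l'')) l' l'' : ℚ)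
              / ((Finsupp.single l0 k) l'') else 0) = _
          rw [Finset.sum_eq_single l0]
          · rw [if_pos ⟨by rw [Finsupp.single_eq_same],
              by rw [Finsupp.single_eq_same]; exact hk0⟩, Finsupp.single_eq_same]
          · intro l'' _ hl
            exact if_neg fun h => h.2 (Finsupp.single_eq_of_ne' (Ne.symm hl))
          · exact fun h => absurd (Finset.mem_univ l0) h
        have hAk : A (e l0) = Ξ p * A k := by
          rw [hA, hA, hk]; exact Amat_mul_prime hΞ hp hk0
        have hsum : (∑ l' : Fin d, ((Ξ p) l l' : ℚ) * lamp l' e)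
            = ((A (e l0)) l l0 : ℚ) / k := by
          rw [hAk]
          simp only [hlamp]
          rw [Matrix.mul_apply]
          push_cast
          rw [Finset.sum_div]
          exact Finset.sum_congr rfl fun l' _ => by ring
        have hRHS0 : (∑ l' : Fin d, if e = Finsupp.single l' (e l') ∧ e l' ≠ 0 ∧ ¬ p ∣ e l'
            then (p : ℚ) * ((A (e l')) l l' : ℚ) / (e l') else 0) = 0 := by
          refine Finset.sum_eq_zero fun l' _ => if_neg fun h => ?_
          by_cases hl : l' = l0
          · subst hl; exact h.2.2 ⟨k, hk⟩
          · exact h.2.1 (hz l' hl)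
        rw [hlam, hsum, hRHS0]
        have hkQ : ((e l0 : ℕ) : ℚ) = (p : ℚ) * k := by rw [hk]; push_cast; ring
        rw [hkQ]
        have hkne : (k : ℚ) ≠ 0 := Nat.cast_ne_zero.mpr hk0
        have hpne : (p : ℚ) ≠ 0 := Nat.cast_ne_zero.mpr hp.ne_zero
        field_simp
        ring
      · -- p does not divide the exponent
        have hlampz : ∀ l' : Fin d, lamp l' e = 0 := by
          intro l'
          show (if ∀ i ∈ e.support, p ∣ e i
            then lam l' (e.mapRange (· / p) (Nat.zero_div p)) else 0) = 0
          rw [if_neg fun hd => hpm (hd l0 (Finsupp.mem_support_iff.mpr hm0))]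
        rw [hlam]
        simp only [hlampz, mul_zero, Finset.sum_const_zero, sub_zero]
        rw [Finset.sum_eq_single l0]
        · rw [if_pos ⟨he, hm0, hpm⟩, mul_div_assoc]
        · intro l' _ hl
          exact if_neg fun h => h.2.1 (hz l' hl)
        · exact fun h => absurd (Finset.mem_univ l0) h
    · -- degenerate case : e is not a single nonzero monomial
      have h1 : lam l e = 0 := Finset.sum_eq_zero fun l' _ =>
        if_neg (fun h => hB ⟨l', h.1, h.2⟩)
      have h2 : ∀ l' : Fin d, lamp l' e = 0 := by
        intro l'
        show (if ∀ i ∈ e.support, p ∣ e i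
          then lam l' (e.mapRange (· / p) (Nat.zero_div p)) else 0) = 0
        split_ifs with hd
        · refine Finset.sum_eq_zero fun l'' _ => if_neg (fun h => hB ⟨l'', ?_, ?_⟩)
          · -- e = single l'' (e l'')
            have hall : ∀ i, p ∣ e i := by
              intro i
              by_cases hi : i ∈ e.support
              · exact hd i hi
              · rw [Finsupp.notMem_support_iff.mp hi]
                exact dvd_zero p
            ext i
            have hi := DFunLike.congr_fun h.1 i
            rw [Finsupp.mapRange_apply] at hi
            rw [← Nat.mul_div_cancel' (hall i), hi]
            by_cases hil : i = l''
            · subst hil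
              rw [Finsupp.single_eq_same, Finsupp.single_eq_same,
                Finsupp.mapRange_apply, Nat.mul_div_cancel' (hall i)]
            · rw [Finsupp.single_eq_of_ne' (Ne.symm hil), Finsupp.single_eq_of_ne' (Ne.symm hil),
                mul_zero]
          · -- e l'' ≠ 0
            intro h0
            apply h.2
            rw [Finsupp.mapRange_apply, h0, Nat.zero_div]
        · rfl
      have h3 : (∑ l' : Fin d, if e = Finsupp.single l' (e l') ∧ e l' ≠ 0 ∧ ¬ p ∣ e l'
          then (p : ℚ) * ((A (e l')) l l' : ℚ) / (e l') else 0) = 0 :=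
        Finset.sum_eq_zero fun l' _ => if_neg (fun h => hB ⟨l', h.1, h.2.1⟩)
      simp [h1, h2, h3]
  constructor
  · funext l e
    have := hco l e
    rwa [MvPowerSeries.coeff_apply] at this
  · intro l e
    rw [hco l e]
    by_cases hB : ∃ l0 : Fin d, e = Finsupp.single l0 (e l0) ∧ e l0 ≠ 0 ∧ ¬ p ∣ e l0
    · obtain ⟨l0, he, hm0, hpm⟩ := hB
      have hz : ∀ l' : Fin d, l' ≠ l0 → e l' = 0 := by
        intro l' hl
        conv_lhs => rw [he]
        exact Finsupp.single_eq_of_ne' (Ne.symm hl)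
      rw [Finset.sum_eq_single l0]
      · rw [if_pos ⟨he, hm0, hpm⟩]
        by_cases ha : (A (e l0)) l l0 = 0
        · left; rw [ha]; simp
        · right
          have hane : (((A (e l0)) l l0 : ℤ) : ℚ) ≠ 0 := Int.cast_ne_zero.mpr ha
          have hmne : ((e l0 : ℕ) : ℚ) ≠ 0 := Nat.cast_ne_zero.mpr hm0
          have hpne : ((p : ℕ) : ℚ) ≠ 0 := Nat.cast_ne_zero.mpr hp.ne_zero
          rw [padicValRat.div (mul_ne_zero hpne hane) hmne,
            padicValRat.mul hpne hane, padicValRat.self hp.one_lt,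
            padicValRat.of_int, padicValRat.of_nat,
            padicValNat.eq_zero_of_not_dvd hpm]
          push_cast
          have := Int.natCast_nonneg (padicValInt p ((A (e l0)) l l0))
          omega
      · intro l' _ hl
        exact if_neg fun h => h.2.1 (hz l' hl)
      · exact fun h => absurd (Finset.mem_univ l0) h
    · left
      exact Finset.sum_eq_zero fun l' _ => if_neg fun h => hB ⟨l', h⟩
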